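/- Let r0 > 0 and ε > 0, and let u_ε : ℝ² → ℝ be defined by u_ε(x) = log(ε²/((ε² + ‖x‖²)²)). Then u_ε is differentiable with Euclidean gradient ∇u_ε(x) = −4x/(ε² + ‖x‖²), and ∫_B ‖∇u_ε(x)‖² dx = 16π·(log((ε² + r0²)/ε²) − r0²/(ε² + r0²)). -/

import Mathlib

open Real MeasureTheory

/-- The Liouville bubble u_ε on ℝ². -/
noncomputable def bubble (ε : ℝ) (x : EuclideanSpace ℝ (Fin 2)) : ℝ :=
  Real.log (ε ^ 2 / (ε ^ 2 + ‖x‖ ^ 2) ^ 2)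

lemma bubble_grad (ε : ℝ) (hε : 0 < ε) (x : EuclideanSpace ℝ (Fin 2)) :
    HasGradientAt (bubble ε) ((-4 / (ε ^ 2 + ‖x‖ ^ 2)) • x) x := by
  set c : ℝ := ε ^ 2 + ‖x‖ ^ 2 with hc
  have hcpos : 0 < c := by positivity
  -- derivative of t ↦ log (ε²/(ε²+t)²) at t = ‖x‖²
  have hden : HasDerivAt (fun t : ℝ => (ε ^ 2 + t) ^ 2) (2 * c ^ 1 * 1) (‖x‖ ^ 2) := by
    simpa using ((hasDerivAt_id (‖x‖ ^ 2)).const_add (ε ^ 2)).fun_pow 2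
  have hdiv : HasDerivAt (fun t : ℝ => ε ^ 2 / (ε ^ 2 + t) ^ 2)
      ((0 * (ε ^ 2 + ‖x‖ ^ 2) ^ 2 - ε ^ 2 * (2 * c ^ 1 * 1)) / ((ε ^ 2 + ‖x‖ ^ 2) ^ 2) ^ 2)
      (‖x‖ ^ 2) :=
    (hasDerivAt_const _ (ε ^ 2)).div hden (by positivity)
  have hlog : HasDerivAt (fun t : ℝ => Real.log (ε ^ 2 / (ε ^ 2 + t) ^ 2))
      (-2 / c) (‖x‖ ^ 2) := by
    have h := hdiv.log (by positivity)
    convert h using 1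
    rw [hc]
    field_simp
    ring
  have hnorm : HasFDerivAt (fun y : EuclideanSpace ℝ (Fin 2) => ‖y‖ ^ 2)
      (2 • (innerSL ℝ x)) x := (hasStrictFDerivAt_norm_sq x).hasFDerivAt
  have hcomp := hlog.comp_hasFDerivAt x hnorm
  have hEq : (InnerProductSpace.toDual ℝ (EuclideanSpace ℝ (Fin 2))) ((-4 / c) • x)
      = (-2 / c) • (2 • (innerSL ℝ x)) := by
    ext y
    simp only [InnerProductSpace.toDual_apply_apply, ContinuousLinearMap.coe_smul', Pi.smul_apply,
      ContinuousLinearMap.smul_apply, innerSL_apply_apply, real_inner_smul_left, smul_eq_mul]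
    ring
  exact hasGradientAt_iff_hasFDerivAt.mpr (hEq ▸ hcomp)

set_option maxHeartbeats 1000000 in
/-- u_ε is differentiable with gradient −4x/(ε²+‖x‖²), and Dirichlet
energy over the ball B = B(0,r0) equal to 16π(log((ε²+r0²)/ε²) − r0²/(ε²+r0²)). -/
theorem stmt_9 (r0 ε : ℝ) (hr : 0 < r0) (hε : 0 < ε) :
    (∀ x : EuclideanSpace ℝ (Fin 2),
      HasGradientAt (bubble ε) ((-4 / (ε ^ 2 + ‖x‖ ^ 2)) • x) x) ∧
    ∫ x in Metric.ball (0 : EuclideanSpace ℝ (Fin 2)) r0, ‖gradient (bubble ε) x‖ ^ 2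
      = 16 * π * (Real.log ((ε ^ 2 + r0 ^ 2) / ε ^ 2) - r0 ^ 2 / (ε ^ 2 + r0 ^ 2)) := by
  have hgrad := bubble_grad ε hε
  refine ⟨hgrad, ?_⟩
  -- pointwise value of the squared gradient norm
  have hval : ∀ x : EuclideanSpace ℝ (Fin 2),
      ‖gradient (bubble ε) x‖ ^ 2 = 16 * ‖x‖ ^ 2 / (ε ^ 2 + ‖x‖ ^ 2) ^ 2 := by
    intro x
    have hc : (0:ℝ) < ε ^ 2 + ‖x‖ ^ 2 := by positivity
    rw [(hgrad x).gradient, norm_smul, mul_pow, Real.norm_eq_abs, sq_abs, div_pow]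
    field_simp
    ring
  -- radial profile
  set f : ℝ → ℝ := fun y => if y < r0 then 16 * y ^ 2 / (ε ^ 2 + y ^ 2) ^ 2 else 0 with hf
  have hstep1 : ∫ x in Metric.ball (0 : EuclideanSpace ℝ (Fin 2)) r0,
      ‖gradient (bubble ε) x‖ ^ 2 = ∫ x : EuclideanSpace ℝ (Fin 2), f ‖x‖ := by
    rw [← integral_indicator measurableSet_ball]
    congr 1
    ext x
    by_cases hx : x ∈ Metric.ball (0 : EuclideanSpace ℝ (Fin 2)) r0
    · rw [Set.indicator_of_mem hx, hval x, hf]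
      simp only [mem_ball_zero_iff.mp hx, if_true]
    · rw [Set.indicator_of_notMem hx, hf]
      simp only [if_neg (fun h : ‖x‖ < r0 => hx (mem_ball_zero_iff.mpr h))]
  have hdim : Module.finrank ℝ (EuclideanSpace ℝ (Fin 2)) = 2 := by
    simp [finrank_euclideanSpace]
  have hstep2 := integral_fun_norm_addHaar (volume : Measure (EuclideanSpace ℝ (Fin 2))) f
  rw [hdim] at hstep2
  have hvol : (volume (Metric.ball (0 : EuclideanSpace ℝ (Fin 2)) 1)).toReal = π := by
    rw [EuclideanSpace.volume_ball]
    have h1 : (Fintype.card (Fin 2) : ℝ) / 2 + 1 = 2 := by norm_num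
    rw [Fintype.card_fin]
    norm_num [h1, Real.Gamma_two, Real.sq_sqrt pi_pos.le,
      ENNReal.toReal_ofReal pi_pos.le]
  -- reduce the radial integral to an interval integral
  have hrad : (∫ y in Set.Ioi (0:ℝ), y ^ (2 - 1) • f y)
      = ∫ y in (0:ℝ)..r0, 16 * y ^ 3 / (ε ^ 2 + y ^ 2) ^ 2 := by
    have hpt : ∀ y : ℝ, y ^ (2 - 1) • f y
        = (Set.Iio r0).indicator (fun y => 16 * y ^ 3 / (ε ^ 2 + y ^ 2) ^ 2) y := by
      intro y
      by_cases hy : y < r0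
      · simp only [hf, if_pos hy, Set.indicator_of_mem (Set.mem_Iio.mpr hy), smul_eq_mul]
        ring
      · simp only [hf, if_neg hy, Set.indicator_of_notMem (fun h => hy (Set.mem_Iio.mp h)),
          smul_eq_mul, mul_zero]
    simp_rw [hpt]
    rw [setIntegral_indicator measurableSet_Iio, Set.Ioi_inter_Iio,
      intervalIntegral.integral_of_le hr.le, ← integral_Ioc_eq_integral_Ioo]
  -- FTC
  have hFTC : (∫ y in (0:ℝ)..r0, 16 * y ^ 3 / (ε ^ 2 + y ^ 2) ^ 2)
      = (8 * Real.log (ε ^ 2 + r0 ^ 2) + 8 * ε ^ 2 / (ε ^ 2 + r0 ^ 2))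
        - (8 * Real.log (ε ^ 2) + 8) := by
    have hderiv : ∀ y ∈ Set.uIcc (0:ℝ) r0,
        HasDerivAt (fun y => 8 * Real.log (ε ^ 2 + y ^ 2) + 8 * ε ^ 2 / (ε ^ 2 + y ^ 2))
          (16 * y ^ 3 / (ε ^ 2 + y ^ 2) ^ 2) y := by
      intro y _
      have hd : (0:ℝ) < ε ^ 2 + y ^ 2 := by positivity
      have h1 : HasDerivAt (fun y : ℝ => ε ^ 2 + y ^ 2) (2 * y ^ 1) y := by
        simpa using (hasDerivAt_pow 2 y).const_add (ε ^ 2)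
      have h2 : HasDerivAt (fun y : ℝ => 8 * Real.log (ε ^ 2 + y ^ 2))
          (8 * (2 * y ^ 1 / (ε ^ 2 + y ^ 2))) y := (h1.log hd.ne').const_mul 8
      have h3 : HasDerivAt (fun y : ℝ => 8 * ε ^ 2 / (ε ^ 2 + y ^ 2))
          ((0 * (ε ^ 2 + y ^ 2) - 8 * ε ^ 2 * (2 * y ^ 1)) / (ε ^ 2 + y ^ 2) ^ 2) y :=
        (hasDerivAt_const _ (8 * ε ^ 2)).div h1 hd.ne'
      have := h2.fun_add h3
      refine this.congr_deriv ?_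
      field_simp
      ring
    have hcont : IntervalIntegrable (fun y => 16 * y ^ 3 / (ε ^ 2 + y ^ 2) ^ 2)
        volume 0 r0 := by
      apply Continuous.intervalIntegrable
      exact Continuous.div (by continuity) (by continuity) (fun y => by positivity)
    have := intervalIntegral.integral_eq_sub_of_hasDerivAt hderiv hcont
    rw [this]
    norm_num
    field_simp
  rw [hstep1, hstep2, hrad, hFTC, measureReal_def, hvol]
  have hlog : Real.log ((ε ^ 2 + r0 ^ 2) / ε ^ 2)
      = Real.log (ε ^ 2 + r0 ^ 2) - Real.log (ε ^ 2) := by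
    rw [Real.log_div (by positivity) (by positivity)]
  rw [hlog, smul_eq_mul, nsmul_eq_mul]
  have hc : (0:ℝ) < ε ^ 2 + r0 ^ 2 := by positivity
  field_simp
  ring
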